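/- arXiv:2301.00445 — 2 statements merged into one kernel-verified Lean document; each statement's English description precedes it below -/
import Mathlib

section
/- Define I₁(d) = ∫₀^∞ ξ^d * e^ξ * (e^ξ + 1) / (e^ξ - 1)³ dξ. Then the function ξ ↦ ξ³ * e^ξ * (e^ξ + 1) / (e^ξ - 1)³ is integrable on (0, ∞) and I₁(3) = π². -/
open Real MeasureTheory Set

noncomputable def I1F (n : ℕ) (ξ : ℝ) : ℝ :=
  ((n : ℝ) + 1) ^ 2 * (ξ ^ 3 * Real.exp (-(((n : ℝ) + 1) * ξ)))

lemma I1F_integrableOn (n : ℕ) : IntegrableOn (I1F n) (Set.Ioi (0 : ℝ)) := by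
  have hb : (0:ℝ) < (n : ℝ) + 1 := by positivity
  have h := (integrableOn_rpow_mul_exp_neg_mul_rpow (p := 1) (s := 3) (b := (n : ℝ) + 1)
    (by norm_num) (by norm_num) hb)
  have h2 : IntegrableOn (fun ξ : ℝ => ξ ^ 3 * Real.exp (-(((n : ℝ) + 1) * ξ)))
      (Set.Ioi (0 : ℝ)) := by
    apply h.congr_fun _ measurableSet_Ioi
    intro x hx
    dsimp only
    rw [Real.rpow_one, show (3:ℝ) = ((3:ℕ):ℝ) by norm_num, Real.rpow_natCast, neg_mul]
  exact h2.const_mul (((n : ℝ) + 1) ^ 2)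

lemma I1F_integral (n : ℕ) :
    ∫ ξ in Set.Ioi (0 : ℝ), I1F n ξ = 6 / ((n : ℝ) + 1) ^ 2 := by
  have hb : (0:ℝ) < (n : ℝ) + 1 := by positivity
  have h := integral_rpow_mul_exp_neg_mul_Ioi (a := 4) (r := (n : ℝ) + 1) (by norm_num) hb
  have h2 : ∫ ξ in Set.Ioi (0 : ℝ), ξ ^ 3 * Real.exp (-(((n : ℝ) + 1) * ξ))
      = (1 / ((n : ℝ) + 1)) ^ (4:ℝ) * Real.Gamma 4 := by
    rw [← h]
    apply setIntegral_congr_fun measurableSet_Ioi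
    intro x hx
    norm_num
  have hG : Real.Gamma 4 = 6 := by
    rw [show (4:ℝ) = ((3:ℕ):ℝ) + 1 by norm_num, Real.Gamma_nat_eq_factorial]
    norm_num [Nat.factorial]
  have hr : (1 / ((n : ℝ) + 1)) ^ (4:ℝ) = (1 / ((n : ℝ) + 1)) ^ (4:ℕ) := by
    rw [show (4:ℝ) = ((4:ℕ):ℝ) by norm_num, Real.rpow_natCast]
  simp only [I1F]
  rw [integral_const_mul, h2, hG, hr]
  field_simp

lemma I1F_hasSum {ξ : ℝ} (hξ : 0 < ξ) :
    HasSum (fun n => I1F n ξ)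
      (ξ ^ 3 * Real.exp ξ * (Real.exp ξ + 1) / (Real.exp ξ - 1) ^ 3) := by
  set x : ℝ := Real.exp (-ξ) with hx
  have hx0 : 0 < x := Real.exp_pos _
  have hx1 : x < 1 := by
    rw [hx, Real.exp_lt_one_iff]; linarith
  have hxn : ‖x‖ < 1 := by rw [Real.norm_eq_abs, abs_of_pos hx0]; exact hx1
  have h2 := hasSum_choose_mul_geometric_of_norm_lt_one (𝕜 := ℝ) 2 hxn
  have h1 := hasSum_choose_mul_geometric_of_norm_lt_one (𝕜 := ℝ) 1 hxn
  have h := (h2.mul_left 2).sub h1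
  have hterm : ∀ n : ℕ, 2 * (((n + 2).choose 2 : ℝ) * x ^ n) - ((n + 1).choose 1 : ℝ) * x ^ n
      = ((n : ℝ) + 1) ^ 2 * x ^ n := by
    intro n
    rw [Nat.cast_choose_two, Nat.choose_one_right]
    push_cast
    ring
  rw [funext hterm] at h
  have h' := h.mul_left (ξ ^ 3 * x)
  have hterm2 : ∀ n : ℕ, ξ ^ 3 * x * (((n : ℝ) + 1) ^ 2 * x ^ n) = I1F n ξ := by
    intro n
    have : x ^ (n + 1) = Real.exp (-(((n : ℝ) + 1) * ξ)) := by
      rw [hx, ← Real.exp_nat_mul]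
      · push_cast; ring_nf
    rw [I1F, ← this, pow_succ]
    ring
  rw [funext hterm2] at h'
  convert h' using 1
  · rfl
  have hE1 : (1:ℝ) < Real.exp ξ := by
    simpa using Real.exp_lt_exp.mpr hξ
  have hE0 : Real.exp ξ ≠ 0 := (Real.exp_pos ξ).ne'
  have hEm1 : Real.exp ξ - 1 ≠ 0 := by linarith
  have hx1' : 1 - x ≠ 0 := by linarith
  rw [hx, Real.exp_neg]
  field_simp
  simp only [div_pow]
  field_simp
  ring

/-- The integrand of `I₁(3)` is integrable on `(0, ∞)` and `I₁(3) = π²`, where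
`I₁(d) = ∫₀^∞ ξ^d e^ξ (e^ξ + 1)/(e^ξ - 1)³ dξ`. -/
theorem I1_three_eq_pi_sq :
    IntegrableOn
      (fun ξ : ℝ => ξ ^ 3 * Real.exp ξ * (Real.exp ξ + 1) / (Real.exp ξ - 1) ^ 3)
      (Set.Ioi (0 : ℝ)) ∧
    ∫ ξ in Set.Ioi (0 : ℝ),
        ξ ^ 3 * Real.exp ξ * (Real.exp ξ + 1) / (Real.exp ξ - 1) ^ 3 = π ^ 2 := by
  set g : ℝ → ℝ := fun ξ => ξ ^ 3 * Real.exp ξ * (Real.exp ξ + 1) / (Real.exp ξ - 1) ^ 3 with hg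
  -- positivity of g on Ioi 0
  have hgpos : ∀ ξ : ℝ, ξ ∈ Set.Ioi (0:ℝ) → 0 ≤ g ξ := by
    intro ξ hξ
    have hξ0 : (0:ℝ) < ξ := hξ
    have hE1 : (1:ℝ) < Real.exp ξ := by simpa using Real.exp_lt_exp.mpr hξ0
    have : (0:ℝ) < Real.exp ξ - 1 := by linarith
    have hEp := Real.exp_pos ξ
    positivity
  -- nonnegativity of each term
  have hFpos : ∀ n : ℕ, ∀ ξ : ℝ, 0 ≤ I1F n ξ ∨ True := fun _ _ => Or.inr trivial
  have hFnn : ∀ n : ℕ, ∀ ξ : ℝ, ξ ∈ Set.Ioi (0:ℝ) → 0 ≤ I1F n ξ := by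
    intro n ξ hξ
    have hξ0 : (0:ℝ) < ξ := hξ
    have := Real.exp_pos (-(((n:ℝ)+1) * ξ))
    unfold I1F
    positivity
  -- summability of the integral values
  have hz : HasSum (fun n : ℕ => 6 / ((n:ℝ) + 1) ^ 2) (π ^ 2) := by
    have h0 := (hasSum_nat_add_iff' (f := fun n : ℕ => (1:ℝ) / (n:ℝ) ^ 2) 1).mpr hasSum_zeta_two
    have h6 := h0.mul_left 6
    have hval : 6 * (π ^ 2 / 6 - ∑ i ∈ Finset.range 1, (1:ℝ) / (i:ℝ) ^ 2) = π ^ 2 := by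
      simp; ring
    rw [hval] at h6
    exact h6.congr_fun (fun n => by push_cast; ring)
  -- norm integrals
  have hnormint : ∀ n : ℕ, ∫ a in Set.Ioi (0:ℝ), ‖I1F n a‖ = 6 / ((n:ℝ) + 1) ^ 2 := by
    intro n
    rw [← I1F_integral n]
    apply setIntegral_congr_fun measurableSet_Ioi
    intro x hx
    exact Real.norm_of_nonneg (hFnn n x hx)
  have hF_sum : Summable fun n : ℕ => ∫ a in Set.Ioi (0:ℝ), ‖I1F n a‖ := by
    apply Summable.congr hz.summable
    intro n
    exact (hnormint n).symm
  have H := hasSum_integral_of_summable_integral_norm (μ := volume.restrict (Set.Ioi (0:ℝ)))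
    (F := I1F) (fun n => I1F_integrableOn n) hF_sum
  -- tsum equals g on Ioi 0
  have htsum : ∀ ξ ∈ Set.Ioi (0:ℝ), (∑' n, I1F n ξ) = g ξ := by
    intro ξ hξ
    exact (I1F_hasSum hξ).tsum_eq
  have hint_eq : ∫ a in Set.Ioi (0:ℝ), (∑' n, I1F n a) = ∫ a in Set.Ioi (0:ℝ), g a :=
    setIntegral_congr_fun measurableSet_Ioi htsum
  -- the integral value
  have hval : ∫ a in Set.Ioi (0:ℝ), g a = π ^ 2 := by
    rw [← hint_eq]
    have H2 : HasSum (fun n : ℕ => ∫ a in Set.Ioi (0:ℝ), I1F n a)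
        (∫ a in Set.Ioi (0:ℝ), (∑' n, I1F n a)) := H
    have H3 : HasSum (fun n : ℕ => ∫ a in Set.Ioi (0:ℝ), I1F n a) (π ^ 2) :=
      hz.congr_fun (fun n => I1F_integral n)
    exact H2.unique H3
  -- integrability
  have hmeas : AEStronglyMeasurable g (volume.restrict (Set.Ioi (0:ℝ))) := by
    apply ContinuousOn.aestronglyMeasurable _ measurableSet_Ioi
    apply ContinuousOn.div
    · fun_prop
    · fun_prop
    · intro ξ hξ
      have hξ0 : (0:ℝ) < ξ := hξ
      have hE1 : (1:ℝ) < Real.exp ξ := by simpa using Real.exp_lt_exp.mpr hξ0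
      exact pow_ne_zero 3 (by linarith)
  have hfin : HasFiniteIntegral g (volume.restrict (Set.Ioi (0:ℝ))) := by
    rw [hasFiniteIntegral_iff_norm]
    have heq : ∀ᵐ a ∂(volume.restrict (Set.Ioi (0:ℝ))),
        ENNReal.ofReal ‖g a‖ = ∑' n, ENNReal.ofReal (I1F n a) := by
      filter_upwards [self_mem_ae_restrict measurableSet_Ioi] with a ha
      rw [Real.norm_of_nonneg (hgpos a ha), ← htsum a ha]
      exact ENNReal.ofReal_tsum_of_nonneg (fun n => hFnn n a ha) (I1F_hasSum ha).summable
    rw [lintegral_congr_ae heq, lintegral_tsum]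
    · have hterm : ∀ n : ℕ, ∫⁻ a in Set.Ioi (0:ℝ), ENNReal.ofReal (I1F n a)
          = ENNReal.ofReal (6 / ((n:ℝ) + 1) ^ 2) := by
        intro n
        rw [← I1F_integral n, ← ofReal_integral_eq_lintegral_ofReal (I1F_integrableOn n)]
        filter_upwards [self_mem_ae_restrict measurableSet_Ioi] with a ha
        exact hFnn n a ha
      rw [funext hterm, ← ENNReal.ofReal_tsum_of_nonneg (fun n => by positivity) hz.summable]
      exact ENNReal.ofReal_lt_top
    · intro n
      exact (ENNReal.measurable_ofReal.comp (by unfold I1F; fun_prop)).aemeasurable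
  exact ⟨⟨hmeas, hfin⟩, hval⟩
end

section
/- Define I₂(d) = ∫₀^∞ ξ^{d+1} * e^ξ * (e^{2ξ} + 4 e^ξ + 1) / (e^ξ - 1)⁴ dξ. Then the function ξ ↦ ξ⁴ * e^ξ * (e^{2ξ} + 4 e^ξ + 1) / (e^ξ - 1)⁴ is integrable on (0, ∞) and I₂(3) = 4π². -/
open Real MeasureTheory Set

private lemma aux_cubic_hasSum {x : ℝ} (hx : |x| < 1) :
    HasSum (fun n : ℕ => ((n : ℝ) + 1) ^ 3 * x ^ n) ((1 + 4*x + x^2) / (1 - x) ^ 4) := by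
  have hx' : ‖x‖ < 1 := hx
  have h1x : (1 : ℝ) - x ≠ 0 := by
    have : x < 1 := lt_of_le_of_lt (le_abs_self x) hx
    linarith
  have h3 := hasSum_choose_mul_geometric_of_norm_lt_one (𝕜 := ℝ) 3 hx'
  have h2 := hasSum_choose_mul_geometric_of_norm_lt_one (𝕜 := ℝ) 2 hx'
  have h1 := hasSum_choose_mul_geometric_of_norm_lt_one (𝕜 := ℝ) 1 hx'
  have H := ((h3.mul_left 6).sub (h2.mul_left 6)).add h1
  convert H using 1
  · rfl
  · funext n
    have c3 : 6 * (n+3).choose 3 = (n+1)*(n+2)*(n+3) := by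
      have := Nat.descFactorial_eq_factorial_mul_choose (n+3) 3
      simp [Nat.descFactorial, Nat.factorial] at this
      rw [← this] <;> ring
    have c2 : 2 * (n+2).choose 2 = (n+1)*(n+2) := by
      have := Nat.descFactorial_eq_factorial_mul_choose (n+2) 2
      simp [Nat.descFactorial, Nat.factorial] at this
      rw [← this] <;> ring
    have c3' : (6:ℝ) * ((n+3).choose 3 : ℕ) = ((n:ℝ)+1)*((n:ℝ)+2)*((n:ℝ)+3) := by
      exact_mod_cast c3
    have c2' : (2:ℝ) * ((n+2).choose 2 : ℕ) = ((n:ℝ)+1)*((n:ℝ)+2) := by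
      exact_mod_cast c2
    have ha : (((n+3).choose 3 : ℕ) : ℝ) = ((n:ℝ)+1)*((n:ℝ)+2)*((n:ℝ)+3) / 6 := by linarith
    have hb : (((n+2).choose 2 : ℕ) : ℝ) = ((n:ℝ)+1)*((n:ℝ)+2) / 2 := by linarith
    have hc : (((n+1).choose 1 : ℕ) : ℝ) = (n:ℝ)+1 := by
      push_cast [Nat.choose_one_right]; ring
    rw [ha, hb, hc]
    ring
  · field_simp
    ring

private lemma aux_pointwise {ξ : ℝ} (hξ : 0 < ξ) :
    HasSum (fun n : ℕ => ((n:ℝ)+1)^3 * (ξ^4 * Real.exp (-(((n:ℝ)+1) * ξ))))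
      (ξ ^ 4 * Real.exp ξ * (Real.exp (2 * ξ) + 4 * Real.exp ξ + 1) / (Real.exp ξ - 1) ^ 4) := by
  have hx1 : Real.exp (-ξ) < 1 := Real.exp_lt_one_iff.mpr (by linarith)
  have hx0 : 0 < Real.exp (-ξ) := Real.exp_pos _
  have hx : |Real.exp (-ξ)| < 1 := by rwa [abs_of_pos hx0]
  have S := (aux_cubic_hasSum hx).mul_left (ξ^4 * Real.exp (-ξ))
  convert S using 1
  · rfl
  · funext n
    rw [← Real.exp_nat_mul, show -(((n:ℝ)+1)*ξ) = -ξ + (n:ℝ)*(-ξ) by ring, Real.exp_add]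
    ring
  · have hE : (1:ℝ) < Real.exp ξ := by
      rw [← Real.exp_zero]; exact Real.exp_lt_exp.mpr hξ
    have hE0 : Real.exp ξ ≠ 0 := (Real.exp_pos _).ne'
    have hE1 : Real.exp ξ - 1 ≠ 0 := by linarith
    rw [Real.exp_neg, two_mul, Real.exp_add]
    have h1x : 1 - (Real.exp ξ)⁻¹ ≠ 0 := by
      have : (Real.exp ξ)⁻¹ < 1 := by rwa [← Real.exp_neg]
      intro h; rw [sub_eq_zero] at h; exact absurd h.symm this.ne
    field_simp

private lemma aux_int_val {c : ℝ} (hc : 0 < c) :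
    ∫ ξ in Ioi (0:ℝ), ξ ^ 4 * Real.exp (-(c * ξ)) = 24 / c ^ 5 := by
  have h := Real.integral_rpow_mul_exp_neg_mul_Ioi (a := 5) (by norm_num) hc
  rw [setIntegral_congr_fun measurableSet_Ioi (g := fun t : ℝ => t ^ ((5:ℝ)-1) * Real.exp (-(c*t)))
    (fun t ht => by
      norm_num)]
  rw [h]
  rw [Real.Gamma_ofNat_eq_factorial 4]
  rw [show ((5:ℝ)) = ((5:ℕ):ℝ) by norm_num, Real.rpow_natCast]
  norm_num [Nat.factorial]
  ring

private lemma aux_int {c : ℝ} (hc : 0 < c) :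
    IntegrableOn (fun ξ : ℝ => ξ ^ 4 * Real.exp (-(c * ξ))) (Ioi 0) := by
  have h := integrableOn_rpow_mul_exp_neg_mul_rpow (s := 4) (p := 1) (by norm_num) zero_lt_one hc
  refine h.congr_fun (fun x hx => ?_) measurableSet_Ioi
  dsimp only
  rw [Real.rpow_one, show ((4:ℝ)) = ((4:ℕ):ℝ) by norm_num, Real.rpow_natCast, neg_mul]

/-- The integrand of `I₂(3)` is integrable on `(0, ∞)` and `I₂(3) = 4π²`, where
`I₂(d) = ∫₀^∞ ξ^{d+1} e^ξ (e^{2ξ} + 4e^ξ + 1)/(e^ξ - 1)⁴ dξ`. -/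
theorem I2_three_eq_four_pi_sq :
    IntegrableOn
      (fun ξ : ℝ => ξ ^ 4 * Real.exp ξ * (Real.exp (2 * ξ) + 4 * Real.exp ξ + 1) /
        (Real.exp ξ - 1) ^ 4)
      (Set.Ioi (0 : ℝ)) ∧
    ∫ ξ in Set.Ioi (0 : ℝ),
        ξ ^ 4 * Real.exp ξ * (Real.exp (2 * ξ) + 4 * Real.exp ξ + 1) /
          (Real.exp ξ - 1) ^ 4 = 4 * π ^ 2 := by
  set f : ℝ → ℝ := fun ξ => ξ ^ 4 * Real.exp ξ * (Real.exp (2 * ξ) + 4 * Real.exp ξ + 1) /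
        (Real.exp ξ - 1) ^ 4 with hf
  set F : ℕ → ℝ → ℝ := fun n ξ => ((n:ℝ)+1)^3 * (ξ^4 * Real.exp (-(((n:ℝ)+1) * ξ))) with hF
  have hc : ∀ n : ℕ, (0:ℝ) < (n:ℝ) + 1 := fun n => by positivity
  have hF_int : ∀ n : ℕ, IntegrableOn (F n) (Ioi 0) := fun n =>
    (aux_int (hc n)).const_mul _
  have hF_nonneg : ∀ n ξ, 0 ≤ F n ξ := fun n ξ => by positivity
  have hF_val : ∀ n : ℕ, ∫ ξ in Ioi (0:ℝ), F n ξ = 24 / ((n:ℝ)+1)^2 := by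
    intro n
    rw [hF]
    rw [MeasureTheory.integral_const_mul, aux_int_val (hc n)]
    have := (hc n).ne'
    field_simp
  have hF_norm : ∀ n : ℕ, ∫ ξ in Ioi (0:ℝ), ‖F n ξ‖ = 24 / ((n:ℝ)+1)^2 := by
    intro n
    rw [← hF_val n]
    exact setIntegral_congr_fun measurableSet_Ioi fun ξ _ =>
      Real.norm_of_nonneg (hF_nonneg n ξ)
  have hsummable : Summable (fun n : ℕ => (24:ℝ) / ((n:ℝ)+1)^2) := by
    have h := (Real.summable_one_div_nat_pow.mpr (by norm_num : 1 < 2)).mul_left 24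
    have h2 := (summable_nat_add_iff 1).mpr h
    refine h2.congr fun n => ?_
    push_cast
    ring
  have hsum : Summable (fun n : ℕ => ∫ ξ in Ioi (0:ℝ), ‖F n ξ‖) := by
    refine hsummable.congr fun n => (hF_norm n).symm
  have HS : HasSum (fun n : ℕ => ∫ ξ in Ioi (0:ℝ), F n ξ)
      (∫ ξ in Ioi (0:ℝ), ∑' n, F n ξ) :=
    hasSum_integral_of_summable_integral_norm hF_int hsum
  have hptw : ∀ ξ ∈ Ioi (0:ℝ), ∑' n, F n ξ = f ξ := fun ξ hξ =>
    (aux_pointwise hξ).tsum_eq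
  have hintsum : ∫ ξ in Ioi (0:ℝ), ∑' n, F n ξ = ∫ ξ in Ioi (0:ℝ), f ξ :=
    setIntegral_congr_fun measurableSet_Ioi hptw
  have Htarget : HasSum (fun n : ℕ => (24:ℝ) / ((n:ℝ)+1)^2) (4 * π ^ 2) := by
    have h := hasSum_zeta_two.mul_left 24
    have h2 := (hasSum_nat_add_iff' (f := fun n : ℕ => 24 * ((1:ℝ) / (n:ℝ)^2) ) 1).mpr h
    have hfun : (fun n : ℕ => (24:ℝ)/((n:ℝ)+1)^2)
        = (fun n : ℕ => 24 * ((1:ℝ)/(((n:ℕ)+1:ℕ):ℝ)^2)) := by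
      funext n; push_cast; ring
    rw [hfun]
    convert h2 using 1
    · rfl
    simp [Finset.sum_range_one]
    ring
  simp only [hF_val] at HS
  have hval : ∫ ξ in Ioi (0:ℝ), f ξ = 4 * π ^ 2 := by
    rw [← hintsum]
    exact HS.unique Htarget
  have hF_cont : ∀ n : ℕ, Continuous (F n) := by
    intro n
    rw [hF]
    fun_prop
  have hf_cont : ContinuousOn f (Ioi 0) := by
    rw [hf]
    apply ContinuousOn.div
    · fun_prop
    · fun_prop
    · intro ξ hξ
      have hE : (1:ℝ) < Real.exp ξ := by
        rw [← Real.exp_zero]; exact Real.exp_lt_exp.mpr hξ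
      have : Real.exp ξ - 1 ≠ 0 := by linarith
      positivity
  have hf_nonneg : ∀ ξ ∈ Ioi (0:ℝ), 0 ≤ f ξ := by
    intro ξ hξ
    have hE : (1:ℝ) < Real.exp ξ := by
      rw [← Real.exp_zero]; exact Real.exp_lt_exp.mpr (mem_Ioi.mp hξ)
    rw [hf]
    have h1 : (0:ℝ) < Real.exp ξ - 1 := by linarith
    positivity
  have hmeas : AEStronglyMeasurable f (volume.restrict (Ioi 0)) :=
    hf_cont.aestronglyMeasurable measurableSet_Ioi
  have hae : 0 ≤ᵐ[volume.restrict (Ioi 0)] f :=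
    (ae_restrict_iff' measurableSet_Ioi).mpr (ae_of_all _ hf_nonneg)
  have hint : IntegrableOn f (Ioi 0) := by
    refine ⟨hmeas, ?_⟩
    rw [hasFiniteIntegral_iff_ofReal hae]
    have e1 : ∫⁻ a in Ioi (0:ℝ), ENNReal.ofReal (f a)
        = ∫⁻ a in Ioi (0:ℝ), ∑' n, ENNReal.ofReal (F n a) := by
      refine setLIntegral_congr_fun measurableSet_Ioi (fun a ha => ?_)
      rw [← hptw a ha,
        ENNReal.ofReal_tsum_of_nonneg (fun n => hF_nonneg n a) (aux_pointwise ha).summable]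
    have e2 : ∫⁻ a in Ioi (0:ℝ), ∑' n, ENNReal.ofReal (F n a)
        = ∑' n, ∫⁻ a in Ioi (0:ℝ), ENNReal.ofReal (F n a) :=
      lintegral_tsum fun n => ((hF_cont n).measurable.ennreal_ofReal).aemeasurable
    have e3 : ∀ n : ℕ, ∫⁻ a in Ioi (0:ℝ), ENNReal.ofReal (F n a)
        = ENNReal.ofReal (24 / ((n:ℝ)+1)^2) := by
      intro n
      rw [← hF_val n]
      exact (ofReal_integral_eq_lintegral_ofReal (hF_int n)
        (ae_of_all _ fun a => hF_nonneg n a)).symm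
    rw [e1, e2]
    simp only [e3]
    rw [← ENNReal.ofReal_tsum_of_nonneg (fun n => by positivity) hsummable]
    exact ENNReal.ofReal_lt_top
  exact ⟨hint, hval⟩
end
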